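/- arXiv:2401.08215 — 3 statements merged into one kernel-verified Lean document; each statement's English description precedes it below -/
import Mathlib

section
/- Let n1, n2, d1, d2 be positive integers with 1 ≤ d1 ≤ n1 - 1 and 1 ≤ d2 ≤ n2 - 1. If d1/n1 = d2/n2 (as rationals) and binom(n1, d1) = binom(n2, d2), then n1 = n2 and d1 = d2. -/
lemma diag_lt (n d a : ℕ) (hd : d + 1 ≤ n) :
    n.choose d < (n + a + 1).choose (d + a + 1) := by
  induction a with
  | zero =>
      have h : (n + 0 + 1).choose (d + 0 + 1) = n.choose d + n.choose (d + 1) := by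
        simp [Nat.choose_succ_succ]
      have : 0 < n.choose (d + 1) := Nat.choose_pos hd
      omega
  | succ a ih =>
      have : (n + (a+1) + 1).choose (d + (a+1) + 1)
          = (n + a + 1).choose (d + a + 1) + (n + a + 1).choose (d + a + 2) := by
        have : n + (a+1) + 1 = (n + a + 1) + 1 := by ring
        rw [this]
        have : d + (a+1) + 1 = (d + a + 1) + 1 := by ring
        rw [this, Nat.choose_succ_succ]
      omega

lemma key_lt (n1 n2 d1 d2 : ℕ) (hlt : n1 < n2)
    (hd1 : 1 ≤ d1) (hd1' : d1 + 1 ≤ n1)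
    (hdd : d1 < d2) (hnd : n1 - d1 ≤ n2 - d2) :
    n1.choose d1 < n2.choose d2 := by
  obtain ⟨a, ha⟩ : ∃ a, d2 = d1 + a + 1 := ⟨d2 - d1 - 1, by omega⟩
  have h1 : n1.choose d1 < (n1 + a + 1).choose (d1 + a + 1) := diag_lt n1 d1 a hd1'
  have h2 : (n1 + a + 1).choose d2 ≤ n2.choose d2 := by
    apply Nat.choose_le_choose
    omega
  rw [ha] at h2 ⊢
  exact lt_of_lt_of_le h1 h2

set_option maxHeartbeats 1000000 in
theorem stmt_0 (n1 n2 d1 d2 : ℕ) (hn1 : 0 < n1) (hn2 : 0 < n2)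
    (hd1 : 1 ≤ d1) (hd1' : d1 ≤ n1 - 1) (hd2 : 1 ≤ d2) (hd2' : d2 ≤ n2 - 1)
    (hratio : (d1 : ℚ) / (n1 : ℚ) = (d2 : ℚ) / (n2 : ℚ))
    (hbinom : n1.choose d1 = n2.choose d2) :
    n1 = n2 ∧ d1 = d2 := by
  have hn1' : (n1 : ℚ) ≠ 0 := Nat.cast_ne_zero.mpr hn1.ne'
  have hn2' : (n2 : ℚ) ≠ 0 := Nat.cast_ne_zero.mpr hn2.ne'
  have hcross : d1 * n2 = d2 * n1 := by
    rw [div_eq_div_iff hn1' hn2'] at hratio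
    exact_mod_cast hratio
  have hne : n1 = n2 := by
    by_contra h
    rcases Nat.lt_or_ge n1 n2 with hlt | hge
    · have hdd : d1 < d2 := by nlinarith
      have hnd : n1 - d1 ≤ n2 - d2 := by
        have h1 : (n1 - d1) * n2 = (n2 - d2) * n1 := by
          have e1 : d1 ≤ n1 := by omega
          have e2 : d2 ≤ n2 := by omega
          zify [e1, e2]
          push_cast at hcross ⊢
          nlinarith [hcross]
        nlinarith [Nat.sub_le n1 d1, Nat.sub_le n2 d2]
      exact absurd hbinom (Nat.ne_of_lt (key_lt n1 n2 d1 d2 hlt hd1 (by omega) hdd hnd))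
    · have hlt : n2 < n1 := by omega
      have hdd : d2 < d1 := by nlinarith
      have hnd : n2 - d2 ≤ n1 - d1 := by
        have h1 : (n1 - d1) * n2 = (n2 - d2) * n1 := by
          have e1 : d1 ≤ n1 := by omega
          have e2 : d2 ≤ n2 := by omega
          zify [e1, e2]
          push_cast at hcross ⊢
          nlinarith [hcross]
        nlinarith [Nat.sub_le n1 d1, Nat.sub_le n2 d2]
      exact absurd hbinom.symm
        (Nat.ne_of_lt (key_lt n2 n1 d2 d1 hlt hd2 (by omega) hdd hnd))
  refine ⟨hne, ?_⟩
  subst hne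
  exact Nat.eq_of_mul_eq_mul_right hn1 hcross
end

section
/- Let n1, n2, d1, d2 be positive integers with 1 ≤ d1 ≤ n1 - 1 and 1 ≤ d2 ≤ n2 - 1. If binom(n1 - 1, d1) = binom(n2 - 1, d2) and binom(n1 - 1, d1 - 1) = binom(n2 - 1, d2 - 1), then n1 = n2 and d1 = d2. -/
lemma choose_le_diag (m d t : ℕ) : Nat.choose m d ≤ Nat.choose (m + t) (d + t) := by
  induction t with
  | zero => simp
  | succ t ih =>
    calc Nat.choose m d ≤ Nat.choose (m + t) (d + t) := ih
      _ ≤ Nat.choose (m + t + 1) (d + t + 1) := by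
          rw [Nat.choose_succ_succ]; exact Nat.le_add_right _ _

lemma ratio_eq (m c : ℕ) :
    (m + 1) * Nat.choose m c = (Nat.choose m (c + 1) + Nat.choose m c) * (c + 1) := by
  have := Nat.add_one_mul_choose_eq m c
  rw [Nat.choose_succ_succ] at this
  simp only [Nat.succ_eq_add_one] at this
  rw [Nat.add_comm (Nat.choose m (c+1))]
  exact this

lemma key (m1 m2 c1 c2 : ℕ) (h1 : c1 + 1 ≤ m1) (h2 : c2 + 1 ≤ m2)
    (ha : Nat.choose m1 (c1 + 1) = Nat.choose m2 (c2 + 1))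
    (hb : Nat.choose m1 c1 = Nat.choose m2 c2)
    (hlt : m1 < m2) : False := by
  obtain ⟨a, hadef⟩ : ∃ a, a = Nat.choose m1 (c1 + 1) := ⟨_, rfl⟩
  obtain ⟨b, hbdef⟩ : ∃ b, b = Nat.choose m1 c1 := ⟨_, rfl⟩
  have hapos : 0 < a := hadef ▸ Nat.choose_pos h1
  have hbpos : 0 < b := hbdef ▸ Nat.choose_pos (by omega)
  have e1 : (m1 + 1) * b = (a + b) * (c1 + 1) := by
    rw [hadef, hbdef]; exact ratio_eq m1 c1
  have e2 : (m2 + 1) * b = (a + b) * (c2 + 1) := by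
    rw [hadef, hbdef, ha, hb]; exact ratio_eq m2 c2
  have hc : c1 < c2 := by
    have h : (a + b) * (c1 + 1) < (a + b) * (c2 + 1) := by
      rw [← e1, ← e2]
      exact (Nat.mul_lt_mul_right hbpos).mpr (by omega)
    have := Nat.lt_of_mul_lt_mul_left h
    omega
  have e1' : (m1 + 1) * a = (a + b) * (m1 - c1) := by
    have h : (m1 + 1) * (a + b) = (a + b) * (c1 + 1) + (a + b) * (m1 - c1) := by
      rw [← Nat.mul_add]
      have : c1 + 1 + (m1 - c1) = m1 + 1 := by omega
      rw [this, Nat.mul_comm]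
    have hdist : (m1 + 1) * (a + b) = (m1 + 1) * a + (m1 + 1) * b := Nat.mul_add _ _ _
    omega
  have e2' : (m2 + 1) * a = (a + b) * (m2 - c2) := by
    have h : (m2 + 1) * (a + b) = (a + b) * (c2 + 1) + (a + b) * (m2 - c2) := by
      rw [← Nat.mul_add]
      have : c2 + 1 + (m2 - c2) = m2 + 1 := by omega
      rw [this, Nat.mul_comm]
    have hdist : (m2 + 1) * (a + b) = (m2 + 1) * a + (m2 + 1) * b := Nat.mul_add _ _ _
    omega
  have hmc : m1 - c1 < m2 - c2 := by
    have h : (a + b) * (m1 - c1) < (a + b) * (m2 - c2) := by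
      rw [← e1', ← e2']
      exact (Nat.mul_lt_mul_right hapos).mpr (by omega)
    exact Nat.lt_of_mul_lt_mul_left h
  have s1 : Nat.choose m1 (c1 + 1) ≤ Nat.choose (m1 + (c2 - c1)) (c2 + 1) := by
    have := choose_le_diag m1 (c1 + 1) (c2 - c1)
    have hq : c1 + 1 + (c2 - c1) = c2 + 1 := by omega
    rwa [hq] at this
  have s2 : Nat.choose (m1 + (c2 - c1)) (c2 + 1) < Nat.choose (m1 + (c2 - c1) + 1) (c2 + 1) := by
    rw [Nat.choose_succ_succ']
    have : 0 < Nat.choose (m1 + (c2 - c1)) c2 := Nat.choose_pos (by omega)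
    omega
  have s3 : Nat.choose (m1 + (c2 - c1) + 1) (c2 + 1) ≤ Nat.choose m2 (c2 + 1) :=
    Nat.choose_le_choose _ (by omega)
  have : Nat.choose m1 (c1 + 1) < Nat.choose m2 (c2 + 1) := by
    calc Nat.choose m1 (c1+1) ≤ _ := s1
      _ < _ := s2
      _ ≤ _ := s3
  omega

theorem stmt_1 (n1 n2 d1 d2 : ℕ) (hn1 : 0 < n1) (hn2 : 0 < n2)
    (hd1 : 1 ≤ d1) (hd1' : d1 ≤ n1 - 1) (hd2 : 1 ≤ d2) (hd2' : d2 ≤ n2 - 1)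
    (hbinom1 : (n1 - 1).choose d1 = (n2 - 1).choose d2)
    (hbinom2 : (n1 - 1).choose (d1 - 1) = (n2 - 1).choose (d2 - 1)) :
    n1 = n2 ∧ d1 = d2 := by
  obtain ⟨m1, rfl⟩ : ∃ m, n1 = m + 1 := ⟨n1 - 1, by omega⟩
  obtain ⟨m2, rfl⟩ : ∃ m, n2 = m + 1 := ⟨n2 - 1, by omega⟩
  obtain ⟨c1, rfl⟩ : ∃ c, d1 = c + 1 := ⟨d1 - 1, by omega⟩
  obtain ⟨c2, rfl⟩ : ∃ c, d2 = c + 1 := ⟨d2 - 1, by omega⟩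
  simp only [Nat.add_sub_cancel] at *
  rcases lt_trichotomy m1 m2 with h | h | h
  · exact absurd (key m1 m2 c1 c2 (by omega) (by omega) hbinom1 hbinom2 h) id
  · subst h
    refine ⟨rfl, ?_⟩
    have hbpos : 0 < Nat.choose m1 c1 := Nat.choose_pos (by omega)
    have e1 := ratio_eq m1 c1
    have e2 := ratio_eq m1 c2
    rw [← hbinom1, ← hbinom2] at e2
    -- e1 : (m1+1)*b = (a+b)*(c1+1), e2 : (m1+1)*b = (a+b)*(c2+1)
    have hab : 0 < Nat.choose m1 (c1 + 1) + Nat.choose m1 c1 := by omega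
    have : c1 + 1 = c2 + 1 := by
      by_contra hne
      rcases Nat.lt_or_ge (c1 + 1) (c2 + 1) with hlt | hge
      · have := (Nat.mul_lt_mul_left hab).mpr hlt
        omega
      · have hlt : c2 + 1 < c1 + 1 := by omega
        have := (Nat.mul_lt_mul_left hab).mpr hlt
        omega
    omega
  · exact absurd (key m2 m1 c2 c1 (by omega) (by omega) hbinom1.symm hbinom2.symm h) id
end

section
/- Let G = (I, A) be a finite weakly connected directed graph (no loops, no multiple arrows), and let J, J' ⊆ I be two subsets of vertices with the same cardinality. Then J' can be obtained from J by finitely many moves, where a move replaces a subset K by (K \ {i}) ∪ {j} for some i ∈ K, j ∉ K \ {i} with (i, j) or (j, i) an arrow of G. -/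
/-- In a finite weakly connected digraph (no loops), any two vertex subsets of the same
cardinality are related by finitely many moves along arrows. -/
theorem stmt_11 {I : Type*} [Fintype I] [DecidableEq I]
    (G : I → I → Prop) (hloop : ∀ i, ¬ G i i)
    (hconn : ∀ i j : I, Relation.ReflTransGen (fun a b => G a b ∨ G b a) i j)
    (J J' : Finset I) (hcard : J.card = J'.card) :
    Relation.ReflTransGen
      (fun K K' : Finset I => ∃ i j : I, (G i j ∨ G j i) ∧ i ∈ K ∧ j ∉ K.erase i ∧
        K' = insert j (K.erase i)) J J' := by
  set R := (fun K K' : Finset I => ∃ i j : I, (G i j ∨ G j i) ∧ i ∈ K ∧ j ∉ K.erase i ∧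
        K' = insert j (K.erase i)) with hR
  have key : ∀ (j a : I), Relation.ReflTransGen (fun a b => G a b ∨ G b a) a j →
      ∀ K : Finset I, a ∈ K → j ∉ K → Relation.ReflTransGen R K (insert j (K.erase a)) := by
    intro j a hpath
    induction hpath using Relation.ReflTransGen.head_induction_on with
    | refl => intro K ha hj; exact absurd ha hj
    | @head a b hab hbj ih =>
      intro K ha hj
      by_cases hbK : b ∈ K
      · by_cases hab' : a = b
        · subst hab'; exact ih K ha hj
        · have h1 := ih K hbK hj
          refine h1.trans (Relation.ReflTransGen.single ?_)
          refine ⟨a, b, hab, ?_, ?_, ?_⟩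
          · simp only [Finset.mem_insert, Finset.mem_erase]
            exact Or.inr ⟨hab', ha⟩
          · simp only [Finset.mem_erase, Finset.mem_insert, not_and, not_or]
            intro _; constructor
            · intro h; exact hj (h ▸ hbK)
            · simp [hab']
          · ext x
            simp only [Finset.mem_insert, Finset.mem_erase]
            by_cases hx1 : x = b <;> by_cases hx2 : x = j <;> by_cases hx3 : x = a <;>
              subst_vars <;> simp_all
      · have hba : b ≠ a := fun h => hbK (h ▸ ha)
        by_cases hbj' : b = j
        · subst hbj'
          exact Relation.ReflTransGen.single ⟨a, b, hab, ha,
            by simp only [Finset.mem_erase, not_and]; exact fun _ => hj, rfl⟩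
        · have step : R K (insert b (K.erase a)) :=
            ⟨a, b, hab, ha, by simp [hbK], rfl⟩
          have hbmem : b ∈ insert b (K.erase a) := by simp
          have hjmem : j ∉ insert b (K.erase a) := by
            simp only [Finset.mem_insert, Finset.mem_erase, not_or, not_and]
            exact ⟨fun h => hbj' h.symm, fun _ h => hj h⟩
          have h2 := ih (insert b (K.erase a)) hbmem hjmem
          have heq : (insert b (K.erase a)).erase b = K.erase a := by
            rw [Finset.erase_insert]
            simp [hbK]
          rw [heq] at h2
          exact (Relation.ReflTransGen.single step).trans h2
  have main : ∀ n (J : Finset I), J.card = J'.card → (J' \ J).card = n →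
      Relation.ReflTransGen R J J' := by
    intro n
    induction n using Nat.strong_induction_on with
    | _ n ih =>
      intro J hc hn
      rcases eq_or_ne n 0 with h0 | h0
      · subst h0
        have hsub : J' ⊆ J := Finset.sdiff_eq_empty_iff_subset.mp
          (Finset.card_eq_zero.mp hn)
        have : J = J' := (Finset.eq_of_subset_of_card_le hsub (le_of_eq hc)).symm
        exact this ▸ Relation.ReflTransGen.refl
      · have hpos : 0 < (J' \ J).card := by omega
        obtain ⟨j, hj⟩ := Finset.card_pos.mp hpos
        have hpos' : 0 < (J \ J').card := by
          rwa [Finset.card_sdiff_comm hc.symm] at hpos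
        obtain ⟨i, hi⟩ := Finset.card_pos.mp hpos'
        rw [Finset.mem_sdiff] at hi hj
        have step := key j i (hconn i j) J hi.1 hj.2
        set K := insert j (J.erase i) with hK
        have hKcard : K.card = J'.card := by
          rw [hK, Finset.card_insert_of_notMem (by simp [hj.2]),
            Finset.card_erase_of_mem hi.1, ← hc]
          have : 0 < J.card := Finset.card_pos.mpr ⟨i, hi.1⟩
          omega
        have hsd : J' \ K = (J' \ J).erase j := by
          ext x
          simp only [hK, Finset.mem_sdiff, Finset.mem_erase, Finset.mem_insert, not_or,
            not_and]
          constructor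
          · rintro ⟨hx1, hx2, hx3⟩
            refine ⟨hx2, hx1, fun hxJ => ?_⟩
            rcases eq_or_ne x i with rfl | hxi
            · exact hi.2 hx1
            · exact hx3 hxi hxJ
          · rintro ⟨hx1, hx2, hx3⟩
            exact ⟨hx2, hx1, fun _ h => hx3 h⟩
        have hlt : (J' \ K).card < n := by
          rw [hsd, Finset.card_erase_of_mem (by simp [hj.1, hj.2])]
          omega
        exact step.trans (ih _ hlt K hKcard rfl)
  exact main _ J hcard rfl
end
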